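/- Let Z, W be independent with Z ~ N(0,1), W ~ N(μ,1), and α ∈ (0, π/2). Define Λ = min( Z² + (1/2)(1 − sgn(W))W², sin²α·(Z + cot α·sgn(Z)·W)² ). As μ → ∞, Λ converges in distribution to the chi-squared distribution with 1 degree of freedom. -/

import Mathlib

open MeasureTheory ProbabilityTheory Real Filter

open scoped ENNReal NNReal

/-- The chi-squared distribution with `k` degrees of freedom. -/
noncomputable def chiSq (k : ℝ) : Measure ℝ := gammaMeasure (k / 2) (1 / 2)

lemma measurable_realSign : Measurable Real.sign := by
  have h : (Real.sign : ℝ → ℝ) = fun r => if r < 0 then -1 else if 0 < r then 1 else 0 := rfl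
  rw [h]
  exact Measurable.ite (measurableSet_lt measurable_id measurable_const) measurable_const
    (Measurable.ite (measurableSet_lt measurable_const measurable_id) measurable_const
      measurable_const)

lemma min_eq_sq {α z w : ℝ} (hsin : 0 < Real.sin α) (hcos : 0 < Real.cos α)
    (h : 1 + |z| ≤ w * Real.cos α) :
    min (z ^ 2 + 1 / 2 * (1 - Real.sign w) * w ^ 2)
      (Real.sin α ^ 2 * (z + Real.cos α / Real.sin α * Real.sign z * w) ^ 2) = z ^ 2 := by
  have hw : 0 < w := by nlinarith [abs_nonneg z]
  rw [Real.sign_of_pos hw]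
  rcases eq_or_ne z 0 with hz | hz
  · simp [hz]
  · have key : Real.sin α ^ 2 * (z + Real.cos α / Real.sin α * Real.sign z * w) ^ 2
        = (Real.sin α * |z| + Real.cos α * w) ^ 2 := by
      rcases hz.lt_or_gt with hz' | hz'
      · rw [Real.sign_of_neg hz', abs_of_neg hz']
        field_simp
        ring
      · rw [Real.sign_of_pos hz', abs_of_pos hz']
        field_simp
    rw [key]
    have h2 : z ^ 2 + 1 / 2 * (1 - 1) * w ^ 2 = z ^ 2 := by ring
    rw [h2]
    refine min_eq_left ?_
    nlinarith [sq_abs z, abs_nonneg z, mul_nonneg hsin.le (abs_nonneg z)]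

lemma integral_chiSq_one (f : BoundedContinuousFunction ℝ ℝ) :
    ∫ x, f x ∂(chiSq 1) = ∫ x, f (x ^ 2) ∂(gaussianReal 0 1) := by
  have ha : (0:ℝ) < 1/2 := by norm_num
  have h0 : chiSq 1 = volume.withDensity
      (fun x => ((gammaPDFReal (1/2) (1/2) x).toNNReal : ℝ≥0∞)) := rfl
  have hL : ∫ x, f x ∂(chiSq 1) = ∫ x, gammaPDFReal (1/2) (1/2) x * f x := by
    rw [h0, integral_withDensity_eq_integral_smul
      ((measurable_gammaPDFReal _ _).real_toNNReal) (fun x => f x)]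
    refine integral_congr_ae (Eventually.of_forall fun x => ?_)
    simp only [NNReal.smul_def, Real.coe_toNNReal _ (gammaPDFReal_nonneg ha ha x), smul_eq_mul]
  have hR : ∫ x, f (x ^ 2) ∂(gaussianReal 0 1)
      = ∫ x, gaussianPDFReal 0 1 x * f (x ^ 2) := by
    rw [gaussianReal_of_var_ne_zero 0 one_ne_zero]
    have h1 : (gaussianPDF 0 1) = fun x => ((gaussianPDFReal 0 1 x).toNNReal : ℝ≥0∞) := rfl
    rw [h1, integral_withDensity_eq_integral_smul
      ((measurable_gaussianPDFReal _ _).real_toNNReal) (fun x => f (x ^ 2))]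
    refine integral_congr_ae (Eventually.of_forall fun x => ?_)
    simp only [NNReal.smul_def, Real.coe_toNNReal _ (gaussianPDFReal_nonneg _ _ x), smul_eq_mul]
  rw [hL, hR]
  have heven : ∀ x : ℝ, gaussianPDFReal 0 1 |x| * f (|x| ^ 2)
      = gaussianPDFReal 0 1 x * f (x ^ 2) := by
    intro x
    rw [sq_abs]
    congr 1
    simp [gaussianPDFReal, sub_zero, sq_abs]
  have h2 : ∫ x, gaussianPDFReal 0 1 x * f (x ^ 2)
      = 2 * ∫ x in Set.Ioi (0:ℝ), gaussianPDFReal 0 1 x * f (x ^ 2) := by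
    rw [← integral_comp_abs (f := fun x => gaussianPDFReal 0 1 x * f (x ^ 2))]
    exact integral_congr_ae (Eventually.of_forall fun x => (heven x).symm)
  have hsupp : ∀ y ∉ Set.Ioi (0:ℝ), gammaPDFReal (1/2) (1/2) y * f y = 0 := by
    intro y hy
    simp only [Set.mem_Ioi, not_lt] at hy
    rcases eq_or_lt_of_le hy with hy0 | hy0
    · subst hy0
      unfold gammaPDFReal
      rw [if_pos le_rfl, Real.zero_rpow (by norm_num : ((1:ℝ)/2 - 1) ≠ 0)]
      ring
    · unfold gammaPDFReal
      rw [if_neg (not_le.mpr hy0)]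
      ring
  have h3 : ∫ y, gammaPDFReal (1/2) (1/2) y * f y
      = ∫ y in Set.Ioi (0:ℝ), gammaPDFReal (1/2) (1/2) y * f y :=
    (setIntegral_eq_integral_of_forall_compl_eq_zero hsupp).symm
  have h4 : ∫ x in Set.Ioi (0:ℝ), (|(2:ℝ)| * x ^ ((2:ℝ) - 1)) •
        (gammaPDFReal (1/2) (1/2) (x ^ (2:ℝ)) * f (x ^ (2:ℝ)))
      = ∫ y in Set.Ioi (0:ℝ), gammaPDFReal (1/2) (1/2) y * f y :=
    integral_comp_rpow_Ioi (fun y => gammaPDFReal (1/2) (1/2) y * f y) two_ne_zero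
  have hpt : ∀ x ∈ Set.Ioi (0:ℝ), (|(2:ℝ)| * x ^ ((2:ℝ) - 1)) •
        (gammaPDFReal (1/2) (1/2) (x ^ (2:ℝ)) * f (x ^ (2:ℝ)))
      = 2 * (gaussianPDFReal 0 1 x * f (x ^ 2)) := by
    intro x hx
    have hx0 : (0:ℝ) < x := hx
    have hrp : x ^ (2:ℝ) = x ^ 2 := by
      rw [show (2:ℝ) = ((2:ℕ):ℝ) by norm_num, Real.rpow_natCast]
    have hxpow : (x ^ 2 : ℝ) ^ ((1:ℝ)/2 - 1) = x⁻¹ := by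
      rw [← hrp, ← Real.rpow_mul hx0.le,
        show (2:ℝ) * ((1:ℝ)/2 - 1) = -1 by norm_num, Real.rpow_neg_one]
    rw [show ((2:ℝ) - 1) = (1:ℝ) by norm_num, Real.rpow_one, hrp]
    unfold gammaPDFReal gaussianPDFReal
    rw [if_pos (sq_nonneg x), hxpow]
    rw [Real.Gamma_one_half_eq]
    rw [show ((1:ℝ)/2) ^ ((1:ℝ)/2) = Real.sqrt (1/2) from (Real.sqrt_eq_rpow _).symm]
    rw [show Real.sqrt (1/2) = (Real.sqrt 2)⁻¹ by rw [one_div, Real.sqrt_inv]]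
    have hs2 : Real.sqrt (2 * π * ((1:ℝ≥0):ℝ)) = Real.sqrt 2 * Real.sqrt π := by
      rw [NNReal.coe_one, mul_one, Real.sqrt_mul (by norm_num)]
    rw [hs2]
    have he : -(1/2 * x ^ 2) = -(x - 0)^2/(2 * ((1:ℝ≥0):ℝ)) := by
      push_cast; ring
    rw [← he]
    have hsq2 : Real.sqrt 2 ≠ 0 := by positivity
    have hsqpi : Real.sqrt π ≠ 0 := by positivity
    have hxne : x ≠ 0 := hx0.ne'
    field_simp
    generalize rexp (-(x ^ 2 / 2)) = E
    linear_combination (E * f (x ^ 2) * 2) *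
      ((Real.sqrt π * (Real.sqrt π)⁻¹) * (x * x⁻¹) * mul_inv_cancel₀ hsq2
        + (x * x⁻¹) * mul_inv_cancel₀ hsqpi + mul_inv_cancel₀ hxne)
  rw [h2, h3, ← h4, ← integral_const_mul]
  exact setIntegral_congr_fun measurableSet_Ioi hpt

lemma gauss_Iio_atBot : Tendsto (fun a : ℝ => gaussianReal 0 1 (Set.Iio a)) atBot (nhds 0) := by
  have h : ∀ a : ℝ, gaussianReal 0 1 (Set.Iio a) = 1 - gaussianReal 0 1 (Set.Ici a) := by
    intro a
    rw [← Set.compl_Ici, prob_compl_eq_one_sub measurableSet_Ici]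
  simp_rw [h]
  have h2 : Tendsto (fun a : ℝ => gaussianReal 0 1 (Set.Ici a)) atBot (nhds 1) := by
    have := tendsto_measure_Ici_atBot (gaussianReal 0 1)
    simpa using this
  have := ENNReal.Tendsto.sub (tendsto_const_nhds (x := (1:ℝ≥0∞))) h2 (Or.inl ENNReal.one_ne_top)
  simpa using this

lemma gauss_Ioi_atTop : Tendsto (fun a : ℝ => gaussianReal 0 1 (Set.Ioi a)) atTop (nhds 0) := by
  have h : ∀ a : ℝ, gaussianReal 0 1 (Set.Ioi a) = 1 - gaussianReal 0 1 (Set.Iic a) := by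
    intro a
    rw [← Set.compl_Iic, prob_compl_eq_one_sub measurableSet_Iic]
  simp_rw [h]
  have h2 : Tendsto (fun a : ℝ => gaussianReal 0 1 (Set.Iic a)) atTop (nhds 1) := by
    have := tendsto_measure_Iic_atTop (gaussianReal 0 1)
    simpa using this
  have := ENNReal.Tendsto.sub (tendsto_const_nhds (x := (1:ℝ≥0∞))) h2 (Or.inl ENNReal.one_ne_top)
  simpa using this

lemma gauss_shift (μ t : ℝ) :
    gaussianReal μ 1 (Set.Iio t) = gaussianReal 0 1 (Set.Iio (t - μ)) := by
  have h := gaussianReal_map_add_const (μ := 0) (v := 1) μ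
  rw [zero_add] at h
  rw [← h, Measure.map_apply (measurable_add_const μ) measurableSet_Iio]
  congr 1
  ext x
  simp [lt_sub_iff_add_lt]

/-- As `μ → ∞`, the model-T3 approximating statistic
`Λ_μ = min(Z² + (1/2)(1 − sgn W_μ) W_μ², sin²α (Z + cot α · sgn Z · W_μ)²)`
converges in distribution to `χ²₁`. -/
theorem stmt_14 {Ω : Type*} [MeasureSpace Ω] [IsProbabilityMeasure (ℙ : Measure Ω)]
    (Z : Ω → ℝ) (W : ℝ → Ω → ℝ) (α : ℝ) (hα : α ∈ Set.Ioo 0 (Real.pi / 2))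
    (hZ : Measure.map Z ℙ = gaussianReal 0 1)
    (hW : ∀ μ : ℝ, Measure.map (W μ) ℙ = gaussianReal μ 1)
    (hZW : ∀ μ : ℝ, IndepFun Z (W μ) ℙ) :
    ∀ f : BoundedContinuousFunction ℝ ℝ,
      Tendsto (fun μ : ℝ =>
          ∫ ω, f (min
              (Z ω ^ 2 + (1 / 2) * (1 - Real.sign (W μ ω)) * (W μ ω) ^ 2)
              (Real.sin α ^ 2 *
                (Z ω + (Real.cos α / Real.sin α) * Real.sign (Z ω) * W μ ω) ^ 2)) ∂ℙ)
        atTop (nhds (∫ x, f x ∂(chiSq 1))) := by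
  obtain ⟨hα0, hα2⟩ := hα
  have hπ : (0:ℝ) < Real.pi := Real.pi_pos
  have hcos : 0 < Real.cos α := Real.cos_pos_of_mem_Ioo ⟨by linarith, hα2⟩
  have hsin : 0 < Real.sin α := Real.sin_pos_of_pos_of_lt_pi hα0 (by linarith)
  intro f
  have hZm : AEMeasurable Z ℙ := aemeasurable_of_map_neZero (by rw [hZ]; infer_instance)
  have hWm : ∀ μ, AEMeasurable (W μ) ℙ := fun μ =>
    aemeasurable_of_map_neZero (by rw [hW μ]; infer_instance)
  set Z' : Ω → ℝ := hZm.mk Z with hZ'def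
  have hZ'm : Measurable Z' := hZm.measurable_mk
  have hZ'ae : Z =ᵐ[ℙ] Z' := hZm.ae_eq_mk
  have hZ'map : Measure.map Z' ℙ = gaussianReal 0 1 := by
    rw [← Measure.map_congr hZ'ae, hZ]
  set W' : ℝ → Ω → ℝ := fun μ => (hWm μ).mk (W μ) with hW'def
  have hW'm : ∀ μ, Measurable (W' μ) := fun μ => (hWm μ).measurable_mk
  have hW'ae : ∀ μ, W μ =ᵐ[ℙ] W' μ := fun μ => (hWm μ).ae_eq_mk
  have hW'map : ∀ μ, Measure.map (W' μ) ℙ = gaussianReal μ 1 := fun μ => by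
    rw [← Measure.map_congr (hW'ae μ), hW μ]
  have hint : ∀ (g : Ω → ℝ), Measurable g → Integrable (fun ω => f (g ω)) ℙ := by
    intro g hg
    exact (integrable_const ‖f‖).mono'
      ((f.continuous.measurable.comp hg).aestronglyMeasurable)
      (ae_of_all _ fun ω => f.norm_coe_le_norm _)
  have hLval : ∫ x, f x ∂(chiSq 1) = ∫ ω, f (Z' ω ^ 2) ∂ℙ := by
    rw [integral_chiSq_one f, ← hZ'map,
      integral_map hZ'm.aemeasurable
        (Continuous.aestronglyMeasurable (by continuity : Continuous fun x : ℝ => f (x ^ 2)))]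
  rw [Metric.tendsto_nhds]
  intro ε hε
  set δ : ℝ≥0∞ := ENNReal.ofReal (ε / (16 * (‖f‖ + 1))) with hδdef
  have hεf : 0 < ε / (16 * (‖f‖ + 1)) := by positivity
  have hδ0 : 0 < δ := ENNReal.ofReal_pos.mpr hεf
  obtain ⟨A, hA⟩ := eventually_atBot.mp (gauss_Iio_atBot.eventually_lt_const hδ0)
  obtain ⟨B, hB⟩ := eventually_atTop.mp (gauss_Ioi_atTop.eventually_lt_const hδ0)
  set M : ℝ := max (max (-A) B) 0 with hMdef
  have hMA : -M ≤ A := by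
    have : -A ≤ M := le_max_of_le_left (le_max_left _ _)
    linarith
  have hMB : B ≤ M := le_max_of_le_left (le_max_right _ _)
  have hM0 : (0:ℝ) ≤ M := le_max_right _ _
  set t : ℝ := (1 + M) / Real.cos α with htdef
  have hWt : Tendsto (fun μ : ℝ => gaussianReal μ 1 (Set.Iio t)) atTop (nhds 0) := by
    have h1 : Tendsto (fun μ : ℝ => t - μ) atTop atBot :=
      (tendsto_atBot_add_const_left atTop t tendsto_neg_atTop_atBot).congr
        fun x => (sub_eq_add_neg t x).symm
    exact (gauss_Iio_atBot.comp h1).congr fun μ => (gauss_shift μ t).symm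
  filter_upwards [hWt.eventually_lt_const hδ0] with μ hμδ
  set Λ : Ω → ℝ := fun ω =>
    min (Z' ω ^ 2 + 1 / 2 * (1 - Real.sign (W' μ ω)) * W' μ ω ^ 2)
      (Real.sin α ^ 2 * (Z' ω + Real.cos α / Real.sin α * Real.sign (Z' ω) * W' μ ω) ^ 2)
    with hΛdef
  have m1 : Measurable fun ω => Real.sign (W' μ ω) := measurable_realSign.comp (hW'm μ)
  have m2 : Measurable fun ω => Real.sign (Z' ω) := measurable_realSign.comp hZ'm
  have hΛm : Measurable Λ := by
    refine Measurable.min ?_ ?_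
    · exact (hZ'm.pow_const 2).add
        (((measurable_const.sub m1).const_mul (1/2)).mul ((hW'm μ).pow_const 2))
    · exact ((hZ'm.add ((m2.const_mul (Real.cos α / Real.sin α)).mul (hW'm μ))).pow_const 2).const_mul _
  have hint1 : Integrable (fun ω => f (Λ ω)) ℙ := hint _ hΛm
  have hint2 : Integrable (fun ω => f (Z' ω ^ 2)) ℙ := hint _ (hZ'm.pow_const 2)
  have hEq : ∫ ω, f (min
        (Z ω ^ 2 + (1 / 2) * (1 - Real.sign (W μ ω)) * (W μ ω) ^ 2)
        (Real.sin α ^ 2 *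
          (Z ω + (Real.cos α / Real.sin α) * Real.sign (Z ω) * W μ ω) ^ 2)) ∂ℙ
      = ∫ ω, f (Λ ω) ∂ℙ := by
    refine integral_congr_ae ?_
    filter_upwards [hZ'ae, hW'ae μ] with ω h1 h2
    rw [h1, h2]
  set Good : Set Ω := {ω | t ≤ W' μ ω ∧ |Z' ω| ≤ M} with hGooddef
  have hGoodm : MeasurableSet Good :=
    (measurableSet_le measurable_const (hW'm μ)).inter
      (measurableSet_le hZ'm.abs measurable_const)
  have hzero : ∀ ω ∈ Good, f (Λ ω) - f (Z' ω ^ 2) = 0 := by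
    intro ω hω
    have ht1 : t * Real.cos α = 1 + M := div_mul_cancel₀ _ hcos.ne'
    have h1 : 1 + |Z' ω| ≤ W' μ ω * Real.cos α := by
      nlinarith [hω.1, hω.2, mul_le_mul_of_nonneg_right hω.1 hcos.le]
    rw [hΛdef]
    simp only []
    rw [min_eq_sq hsin hcos h1, sub_self]
  have hbound : ∀ ω, |f (Λ ω) - f (Z' ω ^ 2)| ≤ Set.indicator Goodᶜ (fun _ => 2 * ‖f‖) ω := by
    intro ω
    by_cases hω : ω ∈ Good
    · rw [hzero ω hω, Set.indicator_of_notMem (by simpa using hω)]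
      simp
    · rw [Set.indicator_of_mem (by simpa using hω)]
      calc |f (Λ ω) - f (Z' ω ^ 2)| ≤ |f (Λ ω)| + |f (Z' ω ^ 2)| := abs_sub _ _
        _ ≤ ‖f‖ + ‖f‖ := add_le_add
            (by simpa [Real.norm_eq_abs] using f.norm_coe_le_norm (Λ ω))
            (by simpa [Real.norm_eq_abs] using f.norm_coe_le_norm (Z' ω ^ 2))
        _ = 2 * ‖f‖ := by ring
  have hdiff : |∫ ω, f (Λ ω) ∂ℙ - ∫ ω, f (Z' ω ^ 2) ∂ℙ| ≤ 2 * ‖f‖ * (ℙ Goodᶜ).toReal := by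
    rw [← integral_sub hint1 hint2]
    calc |∫ ω, (f (Λ ω) - f (Z' ω ^ 2)) ∂ℙ|
        ≤ ∫ ω, |f (Λ ω) - f (Z' ω ^ 2)| ∂ℙ := by
          simpa [Real.norm_eq_abs] using
            norm_integral_le_integral_norm (fun ω => f (Λ ω) - f (Z' ω ^ 2)) (μ := ℙ)
      _ ≤ ∫ ω, Set.indicator Goodᶜ (fun _ => 2 * ‖f‖) ω ∂ℙ :=
          integral_mono (hint1.sub hint2).abs
            ((integrable_const (2 * ‖f‖)).indicator hGoodm.compl) hbound
      _ = 2 * ‖f‖ * (ℙ Goodᶜ).toReal := by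
          rw [integral_indicator_const _ hGoodm.compl, smul_eq_mul, measureReal_def]; ring
  have hsub : Goodᶜ ⊆ (W' μ)⁻¹' (Set.Iio t) ∪ (Z'⁻¹' (Set.Iio (-M)) ∪ Z'⁻¹' (Set.Ioi M)) := by
    intro ω hω
    simp only [hGooddef, Set.mem_compl_iff, Set.mem_setOf_eq, not_and_or, not_le] at hω
    rcases hω with h | h
    · exact Or.inl h
    · right
      rcases lt_abs.mp h with h' | h'
      · exact Or.inr h'
      · exact Or.inl (by simp only [Set.mem_preimage, Set.mem_Iio]; linarith)
  have hmapZ : ∀ s : Set ℝ, MeasurableSet s → ℙ (Z'⁻¹' s) = gaussianReal 0 1 s := fun s hs => by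
    rw [← hZ'map, Measure.map_apply hZ'm hs]
  have hmapW : ℙ ((W' μ)⁻¹' (Set.Iio t)) = gaussianReal μ 1 (Set.Iio t) := by
    rw [← hW'map μ, Measure.map_apply (hW'm μ) measurableSet_Iio]
  have hbad : ℙ Goodᶜ < δ + (δ + δ) := by
    calc ℙ Goodᶜ ≤ ℙ ((W' μ)⁻¹' (Set.Iio t)) + (ℙ (Z'⁻¹' (Set.Iio (-M))) + ℙ (Z'⁻¹' (Set.Ioi M))) :=
          le_trans (measure_mono hsub)
            ((measure_union_le _ _).trans (add_le_add le_rfl (measure_union_le _ _)))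
      _ < δ + (δ + δ) := by
          rw [hmapW, hmapZ _ measurableSet_Iio, hmapZ _ measurableSet_Ioi]
          exact ENNReal.add_lt_add hμδ (ENNReal.add_lt_add (hA _ hMA) (hB _ hMB))
  have htoReal : (ℙ Goodᶜ).toReal ≤ 3 * (ε / (16 * (‖f‖ + 1))) := by
    have h1 := ENNReal.toReal_mono (by finiteness) hbad.le
    have h2 : (δ + (δ + δ)).toReal = 3 * (ε / (16 * (‖f‖ + 1))) := by
      rw [hδdef, ← ENNReal.ofReal_add hεf.le hεf.le, ← ENNReal.ofReal_add hεf.le (by positivity),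
        ENNReal.toReal_ofReal (by positivity)]
      ring
    linarith [h1, h2.le, h2.ge]
  rw [Real.dist_eq, hEq, hLval]
  calc |∫ ω, f (Λ ω) ∂ℙ - ∫ ω, f (Z' ω ^ 2) ∂ℙ| ≤ 2 * ‖f‖ * (ℙ Goodᶜ).toReal := hdiff
    _ ≤ 2 * ‖f‖ * (3 * (ε / (16 * (‖f‖ + 1)))) :=
        mul_le_mul_of_nonneg_left htoReal (by positivity)
    _ ≤ 2 * (‖f‖ + 1) * (3 * (ε / (16 * (‖f‖ + 1)))) := by
        have hX : 0 ≤ 3 * (ε / (16 * (‖f‖ + 1))) := by positivity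
        have : (2:ℝ) * ‖f‖ ≤ 2 * (‖f‖ + 1) := by linarith
        exact mul_le_mul_of_nonneg_right this hX
    _ < ε := by
        have hD : (0:ℝ) < ‖f‖ + 1 := by positivity
        have heq : 2 * (‖f‖ + 1) * (3 * (ε / (16 * (‖f‖ + 1)))) = 3/8 * ε := by
          field_simp
          ring
        rw [heq]
        linarith
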